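/- arXiv:1801.08227 — 4 statements merged into one kernel-verified Lean document; each statement's English description precedes it below -/
import Mathlib

section
/- Let Z be an m×n real matrix with singular value decomposition Z = U diag(σ) V', where σ = (σ_1, …, σ_{min(m,n)}) are the singular values of Z. Let s ∈ ℝ^{min(m,n)} be any minimizer over the set {α : α ≥ 0} of ḡ(α) := (1/2)‖α − σ‖_2² + Σ_{i=1}^{min(m,n)} P(α_i; λ, γ). Then the matrix X* = U diag(s) V' is a minimizer over all m×n matrices X of g(X) := (1/2)‖X − Z‖_F² + Σ_{i=1}^{min(m,n)} P(σ_i(X); λ, γ); that is, the spectral thresholding operator acts only on the singular values of Z and leaves the singular vectors unchanged. -/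
open Matrix

/-- Squared Frobenius norm of a real matrix. -/
noncomputable def frobSq {m n : ℕ} (A : Matrix (Fin m) (Fin n) ℝ) : ℝ :=
  ∑ i, ∑ j, (A i j) ^ 2

/-- The spectral penalty `∑_{i=1}^{min(m,n)} P(σ_i(X))`: the singular values of `X` are the
square roots of the eigenvalues of the smaller of the two Gram matrices `XᵀX`, `XXᵀ`. -/
noncomputable def spen {m n : ℕ} (P : ℝ → ℝ) (X : Matrix (Fin m) (Fin n) ℝ) : ℝ :=
  if n ≤ m then
    ∑ i : Fin n, P (Real.sqrt ((Matrix.isHermitian_conjTranspose_mul_self X).eigenvalues i))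
  else
    ∑ i : Fin m, P (Real.sqrt ((Matrix.isHermitian_mul_conjTranspose_self X).eigenvalues i))

open Finset Polynomial



/-- layer (Abel) differences of a tuple extended by 0 -/
noncomputable def lay {n : ℕ} (a : Fin n → ℝ) (t : ℕ) : ℝ :=
  (if h : t < n then a ⟨t, h⟩ else 0) - (if h : t + 1 < n then a ⟨t + 1, h⟩ else 0)

noncomputable def indic {n : ℕ} (t : ℕ) (k : Fin n) : ℝ := if (k : ℕ) ≤ t then 1 else 0

lemma indic_nonneg {n : ℕ} (t : ℕ) (k : Fin n) : 0 ≤ indic t k := by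
  unfold indic; split_ifs <;> norm_num

lemma indic_le_one {n : ℕ} (t : ℕ) (k : Fin n) : indic t k ≤ 1 := by
  unfold indic; split_ifs <;> norm_num

lemma lay_nonneg {n : ℕ} (a : Fin n → ℝ) (ha0 : ∀ i, 0 ≤ a i)
    (haA : ∀ i j : Fin n, i ≤ j → a j ≤ a i) (t : ℕ) : 0 ≤ lay a t := by
  unfold lay
  split_ifs with h1 h2 h2
  · exact sub_nonneg.mpr (haA ⟨t, h1⟩ ⟨t + 1, h2⟩ (by simp [Fin.mk_le_mk]))
  · simpa using ha0 ⟨t, h1⟩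
  · omega
  · simp

lemma layer_decomp {n : ℕ} (a : Fin n → ℝ) (k : Fin n) :
    a k = ∑ t ∈ Finset.range n, lay a t * indic t k := by
  have h1 : ∀ t, lay a t * indic t k = if (k : ℕ) ≤ t then lay a t else 0 := by
    intro t; unfold indic; split_ifs <;> simp
  rw [Finset.sum_congr rfl fun t _ => h1 t, ← Finset.sum_filter]
  have h2 : Finset.filter (fun t => (k : ℕ) ≤ t) (Finset.range n) = Finset.Ico (k : ℕ) n := by
    ext t; simp [Finset.mem_Ico, Finset.mem_filter, Finset.mem_range]; omega
  rw [h2]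
  set f : ℕ → ℝ := fun t => if h : t < n then a ⟨t, h⟩ else 0 with hf
  have h3 : ∀ t, lay a t = f t - f (t + 1) := fun t => rfl
  rw [Finset.sum_congr rfl fun t _ => h3 t,
    Finset.sum_Ico_eq_sub _ (le_of_lt k.isLt), Finset.sum_range_sub' f,
    Finset.sum_range_sub' f]
  have h4 : f n = 0 := by simp [hf]
  have h5 : f (k : ℕ) = a k := by simp [hf, k.isLt]
  rw [h4, h5]; ring

lemma rearrange {n : ℕ} (F : Fin n → Fin n → ℝ) (a b : Fin n → ℝ) :
    ∑ k, ∑ l, F k l * a k * b l =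
      ∑ t ∈ Finset.range n, ∑ r ∈ Finset.range n,
        lay a t * lay b r * (∑ k, ∑ l, F k l * indic t k * indic r l) := by
  have step1 : ∑ k, ∑ l, F k l * a k * b l =
      ∑ k, ∑ l, ∑ t ∈ Finset.range n, ∑ r ∈ Finset.range n,
        lay a t * lay b r * (F k l * indic t k * indic r l) := by
    refine Finset.sum_congr rfl fun k _ => Finset.sum_congr rfl fun l _ => ?_
    rw [layer_decomp a k, layer_decomp b l]
    simp only [Finset.mul_sum, Finset.sum_mul]
    rw [Finset.sum_comm]
    refine Finset.sum_congr rfl fun t _ => Finset.sum_congr rfl fun r _ => ?_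
    ring
  rw [step1]
  set g : Fin n → Fin n → ℕ → ℕ → ℝ :=
    fun k l t r => lay a t * lay b r * (F k l * indic t k * indic r l) with hg
  calc ∑ k, ∑ l, ∑ t ∈ Finset.range n, ∑ r ∈ Finset.range n, g k l t r
      = ∑ k, ∑ t ∈ Finset.range n, ∑ l, ∑ r ∈ Finset.range n, g k l t r :=
        Finset.sum_congr rfl fun k _ => Finset.sum_comm
    _ = ∑ t ∈ Finset.range n, ∑ k, ∑ l, ∑ r ∈ Finset.range n, g k l t r :=
        Finset.sum_comm
    _ = ∑ t ∈ Finset.range n, ∑ k, ∑ r ∈ Finset.range n, ∑ l, g k l t r :=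
        Finset.sum_congr rfl fun t _ => Finset.sum_congr rfl fun k _ => Finset.sum_comm
    _ = ∑ t ∈ Finset.range n, ∑ r ∈ Finset.range n, ∑ k, ∑ l, g k l t r :=
        Finset.sum_congr rfl fun t _ => Finset.sum_comm
    _ = ∑ t ∈ Finset.range n, ∑ r ∈ Finset.range n,
          lay a t * lay b r * (∑ k, ∑ l, F k l * indic t k * indic r l) := by
        refine Finset.sum_congr rfl fun t _ => Finset.sum_congr rfl fun r _ => ?_
        simp only [hg, Finset.mul_sum]

lemma ds_bound {n : ℕ} (F : Fin n → Fin n → ℝ) (hF : ∀ k l, 0 ≤ F k l)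
    (hrow : ∀ k, ∑ l, F k l ≤ 1) (hcol : ∀ l, ∑ k, F k l ≤ 1)
    (a b : Fin n → ℝ) (ha0 : ∀ i, 0 ≤ a i) (hb0 : ∀ i, 0 ≤ b i)
    (haA : ∀ i j : Fin n, i ≤ j → a j ≤ a i) (hbA : ∀ i j : Fin n, i ≤ j → b j ≤ b i) :
    ∑ k, ∑ l, F k l * a k * b l ≤ ∑ i, a i * b i := by
  classical
  have hid : ∑ i, a i * b i =
      ∑ k, ∑ l, (if k = l then (1:ℝ) else 0) * a k * b l := by
    refine Finset.sum_congr rfl fun k _ => ?_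
    rw [Finset.sum_eq_single k]
    · simp
    · intro l _ hl; simp [Ne.symm hl]
    · simp
  rw [hid, rearrange F a b, rearrange (fun k l => if k = l then (1:ℝ) else 0) a b]
  refine Finset.sum_le_sum fun t ht => Finset.sum_le_sum fun r hr => ?_
  refine mul_le_mul_of_nonneg_left ?_
    (mul_nonneg (lay_nonneg a ha0 haA t) (lay_nonneg b hb0 hbA r))
  -- core : ∑ k, ∑ l, F k l * indic t k * indic r l ≤ ∑ k, ∑ l, Id k l * indic t k * indic r l
  have hN : ∑ k : Fin n, ∑ l : Fin n, (if k = l then (1:ℝ) else 0) * indic t k * indic r l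
      = ∑ i : Fin n, indic t i * indic r i := by
    refine Finset.sum_congr rfl fun k _ => ?_
    rw [Finset.sum_eq_single k]
    · simp
    · intro l _ hl; simp [Ne.symm hl]
    · simp
  rw [hN]
  rcases le_total t r with htr | hrt
  · -- bound by row sums: ≤ ∑ k, indic t k
    have hNt : ∑ i : Fin n, indic t i * indic r i = ∑ i : Fin n, indic t i := by
      refine Finset.sum_congr rfl fun i _ => ?_
      unfold indic; split_ifs with h1 h2
      · ring
      · exact absurd (h1.trans htr) h2
      · ring
      · ring
    rw [hNt]
    refine Finset.sum_le_sum fun k _ => ?_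
    by_cases hk : (k : ℕ) ≤ t
    · have h1 : indic t k = 1 := if_pos hk
      calc ∑ l, F k l * indic t k * indic r l ≤ ∑ l, F k l := by
            refine Finset.sum_le_sum fun l _ => ?_
            rw [h1, mul_one]
            calc F k l * indic r l ≤ F k l * 1 :=
                  mul_le_mul_of_nonneg_left (indic_le_one r l) (hF k l)
              _ = F k l := mul_one _
        _ ≤ 1 := hrow k
        _ = indic t k := h1.symm
    · have h1 : indic t k = 0 := if_neg hk
      simp [h1]
  · -- bound by column sums: ≤ ∑ l, indic r l
    have hNr : ∑ i : Fin n, indic t i * indic r i = ∑ i : Fin n, indic r i := by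
      refine Finset.sum_congr rfl fun i _ => ?_
      unfold indic; split_ifs with h1 h2 h3
      · ring
      · ring
      · exact absurd (h3.trans hrt) h1
      · ring
    rw [hNr, Finset.sum_comm]
    refine Finset.sum_le_sum fun l _ => ?_
    by_cases hl : (l : ℕ) ≤ r
    · have h1 : indic r l = 1 := if_pos hl
      calc ∑ k, F k l * indic t k * indic r l ≤ ∑ k, F k l := by
            refine Finset.sum_le_sum fun k _ => ?_
            rw [h1, mul_one]
            calc F k l * indic t k ≤ F k l * 1 :=
                  mul_le_mul_of_nonneg_left (indic_le_one t k) (hF k l)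
              _ = F k l := mul_one _
        _ ≤ 1 := hcol l
        _ = indic r l := h1.symm
    · have h1 : indic r l = 0 := if_neg hl
      simp [h1]

lemma charpoly_conj_eq {N : ℕ} (Wl A Wr : Matrix (Fin N) (Fin N) ℝ) (h : Wl * Wr = 1) :
    (Wl * A * Wr).charpoly = A.charpoly := by
  have h' : Wr * Wl = 1 := mul_eq_one_comm.mp h
  have key : charmatrix (Wl * A * Wr) =
      (C : ℝ →+* ℝ[X]).mapMatrix Wl * charmatrix A * (C : ℝ →+* ℝ[X]).mapMatrix Wr := by
    unfold charmatrix
    rw [Matrix.mul_sub, Matrix.sub_mul]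
    congr 1
    · -- Wl * scalar X * Wr = scalar X
      symm
      calc (C : ℝ →+* ℝ[X]).mapMatrix Wl * Matrix.scalar (Fin N) (X : ℝ[X]) *
            (C : ℝ →+* ℝ[X]).mapMatrix Wr
          = (C : ℝ →+* ℝ[X]).mapMatrix Wl * (Matrix.scalar (Fin N) (X : ℝ[X]) *
            (C : ℝ →+* ℝ[X]).mapMatrix Wr) := by rw [Matrix.mul_assoc]
        _ = (C : ℝ →+* ℝ[X]).mapMatrix Wl * ((C : ℝ →+* ℝ[X]).mapMatrix Wr *
            Matrix.scalar (Fin N) (X : ℝ[X])) := by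
              rw [Matrix.scalar_commute (X : ℝ[X]) (fun r => (Commute.all _ _)) _]
        _ = ((C : ℝ →+* ℝ[X]).mapMatrix Wl * (C : ℝ →+* ℝ[X]).mapMatrix Wr) *
            Matrix.scalar (Fin N) (X : ℝ[X]) := by rw [Matrix.mul_assoc]
        _ = Matrix.scalar (Fin N) (X : ℝ[X]) := by
              rw [← _root_.map_mul, h, _root_.map_one, Matrix.one_mul]
    · simp only [_root_.map_mul]
  unfold Matrix.charpoly
  rw [key, Matrix.det_mul, Matrix.det_mul, mul_right_comm, ← Matrix.det_mul,
    show ((C : ℝ →+* ℝ[X]).mapMatrix Wl : Matrix (Fin N) (Fin N) ℝ[X]) *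
      (C : ℝ →+* ℝ[X]).mapMatrix Wr = 1 from by rw [← _root_.map_mul, h, _root_.map_one],
    Matrix.det_one, one_mul]

lemma charpoly_diag {N : ℕ} (d : Fin N → ℝ) :
    (Matrix.diagonal d).charpoly = ∏ i, (X - C (d i)) := by
  have : charmatrix (Matrix.diagonal d) = Matrix.diagonal (fun i => X - C (d i)) := by
    ext i j
    by_cases hij : i = j
    · subst hij; simp
    · rw [charmatrix_apply_ne _ _ _ hij, Matrix.diagonal_apply_ne _ hij,
        Matrix.diagonal_apply_ne _ hij, map_zero, neg_zero]
  rw [Matrix.charpoly, this, Matrix.det_diagonal]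

lemma eig_sum {N : ℕ} {B : Matrix (Fin N) (Fin N) ℝ} (hB : B.IsHermitian)
    (W : Matrix (Fin N) (Fin N) ℝ) (d : Fin N → ℝ)
    (hW : Wᵀ * W = 1) (hBeq : B = W * Matrix.diagonal d * Wᵀ) (f : ℝ → ℝ) :
    ∑ i, f (hB.eigenvalues i) = ∑ i, f (d i) := by
  have hW2 : W * Wᵀ = 1 := mul_eq_one_comm.mp hW
  set W₂ : Matrix (Fin N) (Fin N) ℝ := (hB.eigenvectorUnitary : Matrix (Fin N) (Fin N) ℝ) with hW₂def
  have hW₂ : W₂ * W₂ᵀ = 1 := by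
    have := Matrix.mem_unitaryGroup_iff.mp (hB.eigenvectorUnitary).2
    rwa [Matrix.star_eq_conjTranspose, Matrix.conjTranspose_eq_transpose_of_trivial] at this
  have h2 : B = W₂ * Matrix.diagonal hB.eigenvalues * W₂ᵀ := by
    have := hB.spectral_theorem
    rwa [Unitary.conjStarAlgAut_apply, Matrix.star_eq_conjTranspose, Matrix.conjTranspose_eq_transpose_of_trivial,
      RCLike.ofReal_real_eq_id, Function.id_comp] at this
  have hcp : (Matrix.diagonal hB.eigenvalues).charpoly = (Matrix.diagonal d).charpoly := by
    rw [← charpoly_conj_eq W₂ (Matrix.diagonal hB.eigenvalues) W₂ᵀ hW₂,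
      ← charpoly_conj_eq W (Matrix.diagonal d) Wᵀ hW2, ← h2, ← hBeq]
  rw [charpoly_diag, charpoly_diag] at hcp
  have hroots : Multiset.map hB.eigenvalues Finset.univ.val = Multiset.map d Finset.univ.val := by
    have h1 : ∀ (g : Fin N → ℝ), ∏ i, (X - C (g i)) =
        (Multiset.map (fun a => X - C a) (Multiset.map g Finset.univ.val)).prod := by
      intro g
      rw [Finset.prod_eq_multiset_prod, Multiset.map_map]
      rfl
    rw [h1, h1] at hcp
    calc Multiset.map hB.eigenvalues Finset.univ.val
        = (Multiset.map (fun a => X - C a) (Multiset.map hB.eigenvalues Finset.univ.val)).prod.roots := (roots_multiset_prod_X_sub_C _).symm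
      _ = (Multiset.map (fun a => X - C a) (Multiset.map d Finset.univ.val)).prod.roots := by rw [hcp]
      _ = Multiset.map d Finset.univ.val := roots_multiset_prod_X_sub_C _
  calc ∑ i, f (hB.eigenvalues i) = (Multiset.map f (Multiset.map hB.eigenvalues Finset.univ.val)).sum := by
        rw [Finset.sum_eq_multiset_sum, Multiset.map_map]; rfl
    _ = (Multiset.map f (Multiset.map d Finset.univ.val)).sum := by rw [hroots]
    _ = ∑ i, f (d i) := by rw [Finset.sum_eq_multiset_sum, Multiset.map_map]; rfl

lemma sq_expand {m : ℕ} (u w : Fin m → ℝ) :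
    ∑ i, (u i - w i)^2 = ∑ i, (u i)^2 - 2 * ∑ i, u i * w i + ∑ i, (w i)^2 := by
  rw [Finset.sum_congr rfl fun i (_ : i ∈ univ) =>
    (by ring : (u i - w i)^2 = (u i)^2 - 2*(u i * w i) + (w i)^2),
    Finset.sum_add_distrib, Finset.sum_sub_distrib, Finset.mul_sum]

lemma orth_sum_sq_le {m n : ℕ} (U : Matrix (Fin m) (Fin n) ℝ) (hU : Uᵀ * U = 1)
    (u : Fin m → ℝ) : ∑ l, (∑ i, U i l * u i)^2 ≤ ∑ i, (u i)^2 := by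
  have hUe : ∀ l l' : Fin n, ∑ i, U i l * U i l' = if l = l' then (1:ℝ) else 0 := by
    intro l l'
    have := congrFun (congrFun hU l) l'
    simpa [Matrix.mul_apply, Matrix.one_apply, Matrix.transpose_apply] using this
  set v : Fin n → ℝ := fun l => ∑ i, U i l * u i with hv
  set w : Fin m → ℝ := fun i => ∑ l, U i l * v l with hw
  have key1 : ∑ i, u i * w i = ∑ l, (v l)^2 := by
    calc ∑ i, u i * w i = ∑ i, ∑ l, (U i l * u i) * v l := by
          refine Finset.sum_congr rfl fun i _ => ?_
          rw [hw, Finset.mul_sum]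
          exact Finset.sum_congr rfl fun l _ => by ring
      _ = ∑ l, ∑ i, (U i l * u i) * v l := Finset.sum_comm
      _ = ∑ l, (v l)^2 := by
          refine Finset.sum_congr rfl fun l _ => ?_
          rw [← Finset.sum_mul, sq]
  have key2 : ∑ i, (w i)^2 = ∑ l, (v l)^2 := by
    calc ∑ i, (w i)^2 = ∑ i, ∑ l, ∑ l', (U i l * v l) * (U i l' * v l') := by
          refine Finset.sum_congr rfl fun i _ => ?_
          rw [sq, hw, Finset.sum_mul_sum]
      _ = ∑ l, ∑ i, ∑ l', (U i l * v l) * (U i l' * v l') := Finset.sum_comm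
      _ = ∑ l, ∑ l', ∑ i, (U i l * v l) * (U i l' * v l') :=
          Finset.sum_congr rfl fun l _ => Finset.sum_comm
      _ = ∑ l, ∑ l', (v l * v l') * ∑ i, U i l * U i l' := by
          refine Finset.sum_congr rfl fun l _ => Finset.sum_congr rfl fun l' _ => ?_
          rw [Finset.mul_sum]
          exact Finset.sum_congr rfl fun i _ => by ring
      _ = ∑ l, (v l)^2 := by
          refine Finset.sum_congr rfl fun l _ => ?_
          rw [Finset.sum_congr rfl fun l' (_ : l' ∈ univ) => by rw [hUe l l']]
          rw [Finset.sum_congr rfl fun l' (_ : l' ∈ univ) =>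
            (by split_ifs with h <;> simp [h] <;> ring :
              (v l * v l') * (if l = l' then (1:ℝ) else 0) = if l = l' then (v l)^2 else 0)]
          simp
  have h0 : 0 ≤ ∑ i, (u i - w i)^2 := Finset.sum_nonneg fun i _ => sq_nonneg _
  rw [sq_expand u w, key1, key2] at h0
  linarith

lemma bessel {m n : ℕ} (w : Fin n → Fin m → ℝ) (lam : Fin n → ℝ)
    (hgram : ∀ k k', ∑ i, w k i * w k' i = if k = k' then lam k else 0)
    (p : Fin m → ℝ) (hp : ∑ i, (p i)^2 = 1) :
    ∑ k, (if lam k = 0 then 0 else (∑ i, p i * w k i)^2 / lam k) ≤ 1 := by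
  classical
  set c : Fin n → ℝ := fun k => if lam k = 0 then 0 else (∑ i, p i * w k i) / lam k with hc
  set D : Fin n → ℝ := fun k => if lam k = 0 then 0 else (∑ i, p i * w k i)^2 / lam k with hD
  set t : Fin m → ℝ := fun i => ∑ k, c k * w k i with ht
  have key1 : ∑ i, p i * t i = ∑ k, D k := by
    calc ∑ i, p i * t i = ∑ i, ∑ k, (c k) * (p i * w k i) := by
          refine Finset.sum_congr rfl fun i _ => ?_
          rw [ht, Finset.mul_sum]
          exact Finset.sum_congr rfl fun k _ => by ring
      _ = ∑ k, ∑ i, (c k) * (p i * w k i) := Finset.sum_comm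
      _ = ∑ k, D k := by
          refine Finset.sum_congr rfl fun k _ => ?_
          rw [← Finset.mul_sum, hc, hD]
          by_cases h : lam k = 0
          · simp [h]
          · simp only [if_neg h]; field_simp
  have key2 : ∑ i, (t i)^2 = ∑ k, D k := by
    calc ∑ i, (t i)^2 = ∑ i, ∑ k, ∑ k', (c k * w k i) * (c k' * w k' i) := by
          refine Finset.sum_congr rfl fun i _ => ?_
          rw [sq, ht, Finset.sum_mul_sum]
      _ = ∑ k, ∑ i, ∑ k', (c k * w k i) * (c k' * w k' i) := Finset.sum_comm
      _ = ∑ k, ∑ k', ∑ i, (c k * w k i) * (c k' * w k' i) :=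
          Finset.sum_congr rfl fun k _ => Finset.sum_comm
      _ = ∑ k, ∑ k', (c k * c k') * ∑ i, w k i * w k' i := by
          refine Finset.sum_congr rfl fun k _ => Finset.sum_congr rfl fun k' _ => ?_
          rw [Finset.mul_sum]
          exact Finset.sum_congr rfl fun i _ => by ring
      _ = ∑ k, D k := by
          refine Finset.sum_congr rfl fun k _ => ?_
          rw [Finset.sum_congr rfl fun k' (_ : k' ∈ univ) => by rw [hgram k k']]
          rw [Finset.sum_congr rfl fun k' (_ : k' ∈ univ) =>
            (by split_ifs with h <;> simp [h] :
              (c k * c k') * (if k = k' then lam k else 0) = if k = k' then c k * c k * lam k else 0)]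
          rw [Finset.sum_ite_eq]
          simp only [Finset.mem_univ, if_pos]
          rw [hc, hD]
          by_cases h : lam k = 0
          · simp [h]
          · simp only [if_neg h]; field_simp
  have h0 : 0 ≤ ∑ i, (p i - t i)^2 := Finset.sum_nonneg fun i _ => sq_nonneg _
  rw [sq_expand p t, key1, key2, hp] at h0
  have : ∑ k, (if lam k = 0 then 0 else (∑ i, p i * w k i)^2 / lam k) = ∑ k, D k := rfl
  rw [this]; linarith

lemma frob_trace {m n : ℕ} (A B : Matrix (Fin m) (Fin n) ℝ) :
    (Aᵀ * B).trace = ∑ i, ∑ j, A i j * B i j := by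
  rw [Matrix.trace]
  simp only [Matrix.diag_apply, Matrix.mul_apply, Matrix.transpose_apply]
  exact Finset.sum_comm

lemma frobSq_eq {m n : ℕ} (A : Matrix (Fin m) (Fin n) ℝ) :
    frobSq A = (Aᵀ * A).trace := by
  rw [frob_trace, frobSq]
  exact Finset.sum_congr rfl fun i _ => Finset.sum_congr rfl fun j _ => sq (A i j)

lemma sandwich {m n : ℕ} (U : Matrix (Fin m) (Fin n) ℝ) (V : Matrix (Fin n) (Fin n) ℝ)
    (d : Fin n → ℝ) (hU : Uᵀ * U = 1) :
    (U * Matrix.diagonal d * Vᵀ)ᵀ * (U * Matrix.diagonal d * Vᵀ) =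
      V * Matrix.diagonal (fun i => d i * d i) * Vᵀ := by
  have h1 : (U * Matrix.diagonal d * Vᵀ)ᵀ = V * (Matrix.diagonal d * Uᵀ) := by
    rw [Matrix.transpose_mul, Matrix.transpose_mul, Matrix.transpose_transpose,
      Matrix.diagonal_transpose]
  rw [h1]
  calc V * (Matrix.diagonal d * Uᵀ) * (U * Matrix.diagonal d * Vᵀ)
      = V * (Matrix.diagonal d * ((Uᵀ * U) * (Matrix.diagonal d * Vᵀ))) := by
        simp only [Matrix.mul_assoc]
    _ = V * (Matrix.diagonal d * (Matrix.diagonal d * Vᵀ)) := by rw [hU, Matrix.one_mul]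
    _ = V * Matrix.diagonal (fun i => d i * d i) * Vᵀ := by
        rw [← Matrix.mul_assoc (Matrix.diagonal d), Matrix.diagonal_mul_diagonal,
          Matrix.mul_assoc]

lemma frob_diag {m n : ℕ} (U : Matrix (Fin m) (Fin n) ℝ) (V : Matrix (Fin n) (Fin n) ℝ)
    (d : Fin n → ℝ) (hU : Uᵀ * U = 1) (hV : Vᵀ * V = 1) :
    frobSq (U * Matrix.diagonal d * Vᵀ) = ∑ i, d i * d i := by
  rw [frobSq_eq, sandwich U V d hU,
    Matrix.trace_mul_comm (V * Matrix.diagonal fun i => d i * d i) Vᵀ,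
    ← Matrix.mul_assoc, hV, Matrix.one_mul, Matrix.trace_diagonal]


/-- Let `Z = U diag(σ) Vᵀ` be an SVD of the m×n matrix `Z` (`U` has orthonormal
columns, `V` is orthogonal, `σ` is the nonincreasing nonnegative vector of singular values).
If `s ≥ 0` minimizes `ḡ(α) = ½‖α − σ‖² + ∑ᵢ P(αᵢ)` over `{α : α ≥ 0}`, then
`X* = U diag(s) Vᵀ` minimizes `g(X) = ½‖X − Z‖_F² + ∑ᵢ P(σᵢ(X))` over all m×n matrices. -/
theorem spectral_thresholding_operator
    {m n : ℕ} (P : ℝ → ℝ)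
    (Z : Matrix (Fin m) (Fin n) ℝ)
    (U : Matrix (Fin m) (Fin n) ℝ) (V : Matrix (Fin n) (Fin n) ℝ) (σ : Fin n → ℝ)
    (hU : Uᵀ * U = 1) (hV : Vᵀ * V = 1)
    (hσ : ∀ i, 0 ≤ σ i) (hσord : ∀ i j : Fin n, i ≤ j → σ j ≤ σ i)
    (hZ : Z = U * Matrix.diagonal σ * Vᵀ)
    (s : Fin n → ℝ) (hs : ∀ i, 0 ≤ s i)
    (hsmin : ∀ α : Fin n → ℝ, (∀ i, 0 ≤ α i) →
      (1 / 2) * (∑ i, (s i - σ i) ^ 2) + ∑ i, P (s i) ≤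
      (1 / 2) * (∑ i, (α i - σ i) ^ 2) + ∑ i, P (α i)) :
    ∀ X : Matrix (Fin m) (Fin n) ℝ,
      (1 / 2) * frobSq (U * Matrix.diagonal s * Vᵀ - Z) + spen P (U * Matrix.diagonal s * Vᵀ) ≤
      (1 / 2) * frobSq (X - Z) + spen P X := by
  intro X
  rcases le_or_gt n m with hnm | hmn
  swap
  · exfalso
    have h1 : (1 : Matrix (Fin n) (Fin n) ℝ).rank = n := by
      rw [Matrix.rank_one, Fintype.card_fin]
    have h2 : (Uᵀ * U).rank ≤ m :=
      le_trans (Matrix.rank_mul_le_left Uᵀ U)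
        (le_trans (Matrix.rank_le_card_width Uᵀ) (by simp))
    rw [hU, h1] at h2
    omega
  -- main case n ≤ m
  have hVV : V * Vᵀ = 1 := mul_eq_one_comm.mp hV
  -- ===== LHS computations =====
  have hXstarZ : U * Matrix.diagonal s * Vᵀ - Z =
      U * Matrix.diagonal (fun i => s i - σ i) * Vᵀ := by
    rw [hZ, ← Matrix.sub_mul, ← Matrix.mul_sub, Matrix.diagonal_sub]
  have hfrobL : frobSq (U * Matrix.diagonal s * Vᵀ - Z) = ∑ i, (s i - σ i)^2 := by
    rw [hXstarZ, frob_diag U V _ hU hV]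
    exact Finset.sum_congr rfl fun i _ => (sq _).symm
  have hsandL : (U * Matrix.diagonal s * Vᵀ)ᴴ * (U * Matrix.diagonal s * Vᵀ) =
      V * Matrix.diagonal (fun i => s i * s i) * Vᵀ := by
    rw [Matrix.conjTranspose_eq_transpose_of_trivial]
    exact sandwich U V s hU
  have hspenL : spen P (U * Matrix.diagonal s * Vᵀ) = ∑ i, P (s i) := by
    unfold spen
    rw [if_pos hnm,
      eig_sum (Matrix.isHermitian_conjTranspose_mul_self (U * Matrix.diagonal s * Vᵀ)) V
        (fun i => s i * s i) hV hsandL (fun x => P (Real.sqrt x))]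
    exact Finset.sum_congr rfl fun i _ => by rw [Real.sqrt_mul_self (hs i)]
  -- ===== RHS: spectral data of X =====
  set hX := Matrix.isHermitian_conjTranspose_mul_self X with hhX
  set lam : Fin n → ℝ := hX.eigenvalues with hlam
  have hlam0 : ∀ k, 0 ≤ lam k := fun k =>
    (Matrix.posSemidef_conjTranspose_mul_self X).eigenvalues_nonneg k
  set a : Fin n → ℝ := fun k => Real.sqrt (lam k) with ha
  have ha0 : ∀ k, 0 ≤ a k := fun k => Real.sqrt_nonneg _
  have haa : ∀ k, a k * a k = lam k := fun k => Real.mul_self_sqrt (hlam0 k)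
  set W : Matrix (Fin n) (Fin n) ℝ := (hX.eigenvectorUnitary : Matrix (Fin n) (Fin n) ℝ)
    with hWdef
  have hWW : W * Wᵀ = 1 := by
    have := Matrix.mem_unitaryGroup_iff.mp (hX.eigenvectorUnitary).2
    simp only [Matrix.star_eq_conjTranspose, Matrix.conjTranspose_eq_transpose_of_trivial] at this
    exact this
  have hWtW : Wᵀ * W = 1 := mul_eq_one_comm.mp hWW
  have spec : Xᵀ * X = W * Matrix.diagonal lam * Wᵀ := by
    have := hX.spectral_theorem
    simp only [Unitary.conjStarAlgAut_apply, Matrix.star_eq_conjTranspose, Matrix.conjTranspose_eq_transpose_of_trivial,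
      RCLike.ofReal_real_eq_id, Function.id_comp] at this
    exact this
  set Y : Matrix (Fin m) (Fin n) ℝ := X * W with hYdef
  have hYtY : Yᵀ * Y = Matrix.diagonal lam := by
    calc Yᵀ * Y = Wᵀ * ((Xᵀ * X) * W) := by
          rw [hYdef, Matrix.transpose_mul]
          simp only [Matrix.mul_assoc]
      _ = Wᵀ * (W * (Matrix.diagonal lam * (Wᵀ * W))) := by
          rw [spec]; simp only [Matrix.mul_assoc]
      _ = Matrix.diagonal lam := by
          rw [hWtW, Matrix.mul_one, ← Matrix.mul_assoc, hWtW, Matrix.one_mul]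
  have gram : ∀ k k', ∑ i, Y i k * Y i k' = if k = k' then lam k else 0 := by
    intro k k'
    have := congrFun (congrFun hYtY k) k'
    rw [Matrix.mul_apply] at this
    simp only [Matrix.transpose_apply] at this
    rw [this, Matrix.diagonal_apply]
  set E : Matrix (Fin n) (Fin n) ℝ := Vᵀ * W with hEdef
  have hEtE : Eᵀ * E = 1 := by
    calc Eᵀ * E = Wᵀ * ((V * Vᵀ) * W) := by
          rw [hEdef, Matrix.transpose_mul, Matrix.transpose_transpose]
          simp only [Matrix.mul_assoc]
      _ = 1 := by rw [hVV, Matrix.one_mul, hWtW]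
  have hEEt : E * Eᵀ = 1 := mul_eq_one_comm.mp hEtE
  have Ecol : ∀ k, ∑ l, E l k * E l k = 1 := by
    intro k
    have := congrFun (congrFun hEtE k) k
    rw [Matrix.mul_apply] at this
    simp only [Matrix.transpose_apply] at this
    rw [this, Matrix.one_apply_eq]
  have Erow : ∀ l, ∑ k, E l k * E l k = 1 := by
    intro l
    have := congrFun (congrFun hEEt l) l
    rw [Matrix.mul_apply] at this
    simp only [Matrix.transpose_apply] at this
    rw [this, Matrix.one_apply_eq]
  set Cm : Fin n → Fin n → ℝ := fun l k => ∑ i, U i l * Y i k with hCm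
  -- the inner product T
  set T : ℝ := ∑ i, ∑ j, Z i j * X i j with hT
  have hTtrace : T = ∑ l, ∑ k, σ l * (Cm l k * E l k) := by
    have hXY : X = Y * Wᵀ := by
      rw [hYdef, Matrix.mul_assoc, hWW, Matrix.mul_one]
    have h2 : T = (Zᵀ * X).trace := (frob_trace Z X).symm
    have h3 : Zᵀ * X = V * (Matrix.diagonal σ * (Uᵀ * (Y * Wᵀ))) := by
      rw [hZ, ← hXY]
      rw [Matrix.transpose_mul, Matrix.transpose_mul, Matrix.transpose_transpose,
        Matrix.diagonal_transpose]
      rw [hXY]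
      simp only [Matrix.mul_assoc]
    rw [h2, h3, Matrix.trace_mul_comm V]
    have h4 : Matrix.diagonal σ * (Uᵀ * (Y * Wᵀ)) * V =
        Matrix.diagonal σ * ((Uᵀ * Y) * (Wᵀ * V)) := by
      simp only [Matrix.mul_assoc]
    rw [h4, Matrix.trace]
    refine Finset.sum_congr rfl fun l _ => ?_
    rw [Matrix.diag_apply, Matrix.diagonal_mul, Matrix.mul_apply, Finset.mul_sum]
    refine Finset.sum_congr rfl fun k _ => ?_
    have h5 : (Uᵀ * Y) l k = Cm l k := by
      rw [Matrix.mul_apply]; simp only [Matrix.transpose_apply]; rfl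
    have h6 : (Wᵀ * V) k l = E l k := by
      show (Wᵀ * V) k l = (Vᵀ * W) l k
      rw [Matrix.mul_apply, Matrix.mul_apply]
      simp only [Matrix.transpose_apply]
      exact Finset.sum_congr rfl fun j _ => by ring
    rw [h5, h6]
  -- weight matrices
  set Dm : Fin n → Fin n → ℝ := fun k l => if lam k = 0 then 0 else (Cm l k)^2 / lam k with hDm
  set Fm : Fin n → Fin n → ℝ := fun k l => (Dm k l + (E l k)^2)/2 with hFm
  have hYzero : ∀ k, lam k = 0 → ∀ i, Y i k = 0 := by
    intro k hk i
    have h1 : ∑ i, Y i k * Y i k = 0 := by rw [gram k k, if_pos rfl, hk]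
    have h2 : ∀ j ∈ univ, (0:ℝ) ≤ Y j k * Y j k := fun j _ => mul_self_nonneg _
    have := (Finset.sum_eq_zero_iff_of_nonneg h2).mp h1 i (Finset.mem_univ i)
    exact mul_self_eq_zero.mp this
  have hDm0 : ∀ k l, 0 ≤ Dm k l := by
    intro k l
    rw [hDm]
    by_cases hk : lam k = 0
    · simp [hk]
    · simp only [if_neg hk]
      exact div_nonneg (sq_nonneg _) (hlam0 k)
  have pointwise : ∀ k l, Cm l k * E l k ≤ a k * Fm k l := by
    intro k l
    by_cases hk : lam k = 0
    · have hC : Cm l k = 0 := by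
        rw [hCm]
        exact Finset.sum_eq_zero fun i _ => by rw [hYzero k hk i, mul_zero]
      have haz : a k = 0 := by
        show Real.sqrt (lam k) = 0
        rw [hk, Real.sqrt_zero]
      rw [hC, haz, zero_mul, zero_mul]
    · have hlampos : 0 < lam k := lt_of_le_of_ne (hlam0 k) (Ne.symm hk)
      have hapos : 0 < a k := Real.sqrt_pos.mpr hlampos
      have hsq : a k ^ 2 = lam k := by rw [sq]; exact haa k
      have hdiv : (Cm l k)^2 / lam k = (Cm l k / a k)^2 := by
        rw [div_pow, hsq]
      rw [hFm]
      simp only [hDm, if_neg hk]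
      rw [hdiv]
      set y := Cm l k / a k with hy
      have hx : Cm l k = y * a k := by
        rw [hy, div_mul_cancel₀ _ (ne_of_gt hapos)]
      rw [hx]
      nlinarith [mul_nonneg hapos.le (sq_nonneg (y - E l k))]
  have Frow : ∀ k, ∑ l, Fm k l ≤ 1 := by
    intro k
    have hE : ∑ l, (E l k)^2 = 1 := by
      rw [← Ecol k]; exact Finset.sum_congr rfl fun l _ => sq (E l k)
    have hD : ∑ l, Dm k l ≤ 1 := by
      by_cases hk : lam k = 0
      · simp [hDm, hk]
      · have hlampos : 0 < lam k := lt_of_le_of_ne (hlam0 k) (Ne.symm hk)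
        simp only [hDm, if_neg hk]
        rw [← Finset.sum_div, div_le_one hlampos]
        calc ∑ l, (Cm l k)^2 ≤ ∑ i, (Y i k)^2 := by
              have := orth_sum_sq_le U hU (fun i => Y i k)
              simpa [hCm] using this
          _ = lam k := by
              have hgkk : ∑ i, Y i k * Y i k = lam k := by rw [gram k k, if_pos rfl]
              rw [← hgkk]
              exact Finset.sum_congr rfl fun i _ => sq (Y i k)
    calc ∑ l, Fm k l = ((∑ l, Dm k l) + ∑ l, (E l k)^2)/2 := by
          rw [hFm, ← Finset.sum_add_distrib, Finset.sum_div]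
      _ ≤ (1 + 1)/2 := by linarith
      _ = 1 := by norm_num
  have Fcol : ∀ l, ∑ k, Fm k l ≤ 1 := by
    intro l
    have hE : ∑ k, (E l k)^2 = 1 := by
      rw [← Erow l]; exact Finset.sum_congr rfl fun k _ => sq (E l k)
    have hp : ∑ i, (U i l)^2 = 1 := by
      have := congrFun (congrFun hU l) l
      rw [Matrix.mul_apply] at this
      simp only [Matrix.transpose_apply] at this
      rw [Matrix.one_apply_eq] at this
      rw [← this]
      exact Finset.sum_congr rfl fun i _ => sq (U i l)
    have hD : ∑ k, Dm k l ≤ 1 := by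
      have hgram' : ∀ k k', ∑ i, Y i k * Y i k' = if k = k' then lam k else 0 := gram
      have := bessel (fun k i => Y i k) lam hgram' (fun i => U i l) hp
      simpa [hDm, hCm] using this
    calc ∑ k, Fm k l = ((∑ k, Dm k l) + ∑ k, (E l k)^2)/2 := by
          rw [hFm, ← Finset.sum_add_distrib, Finset.sum_div]
      _ ≤ (1 + 1)/2 := by linarith
      _ = 1 := by norm_num
  have Fm0 : ∀ k l, 0 ≤ Fm k l := fun k l => by
    rw [hFm]
    have := hDm0 k l
    positivity
  -- sorted singular values
  set g : Equiv.Perm (Fin n) := Tuple.sort a with hg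
  set τ : Fin n → ℝ := fun i => a (g i.rev) with hτ
  have hτ0 : ∀ i, 0 ≤ τ i := fun i => ha0 _
  have hτA : ∀ i j : Fin n, i ≤ j → τ j ≤ τ i := by
    intro i j hij
    exact Tuple.monotone_sort a (Fin.rev_le_rev.mpr hij)
  set π : Equiv.Perm (Fin n) := g.symm.trans (Fin.revPerm) with hπdef
  have hπ : ∀ k, τ (π k) = a k := by
    intro k
    show a (g ((Fin.revPerm (g.symm k)).rev)) = a k
    simp [Fin.rev_rev]
  have hperm : ∀ h : ℝ → ℝ, ∑ i, h (τ i) = ∑ k, h (a k) := by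
    intro h
    exact Equiv.sum_comp ((Fin.revPerm : Equiv.Perm (Fin n)).trans g) (fun k => h (a k))
  -- von Neumann
  have vonNeumann : T ≤ ∑ i, τ i * σ i := by
    have S1 : T ≤ ∑ k, ∑ l, Fm k l * a k * σ l := by
      rw [hTtrace]
      calc ∑ l, ∑ k, σ l * (Cm l k * E l k) ≤ ∑ l, ∑ k, σ l * (a k * Fm k l) := by
            refine Finset.sum_le_sum fun l _ => Finset.sum_le_sum fun k _ => ?_
            exact mul_le_mul_of_nonneg_left (pointwise k l) (hσ l)
        _ = ∑ k, ∑ l, Fm k l * a k * σ l := by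
            rw [Finset.sum_comm]
            exact Finset.sum_congr rfl fun k _ => Finset.sum_congr rfl fun l _ => by ring
    have S2 : ∑ k, ∑ l, Fm k l * a k * σ l =
        ∑ k', ∑ l, Fm (π.symm k') l * τ k' * σ l := by
      refine Fintype.sum_equiv π _ _ fun k => ?_
      simp only [Equiv.symm_apply_apply, hπ k]
    have S3 : ∑ k', ∑ l, Fm (π.symm k') l * τ k' * σ l ≤ ∑ i, τ i * σ i := by
      refine ds_bound (fun k' l => Fm (π.symm k') l) (fun k' l => Fm0 _ l)
        (fun k' => Frow _) (fun l => ?_) τ σ hτ0 hσ hτA hσord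
      calc ∑ k', Fm (π.symm k') l = ∑ k, Fm k l :=
            Equiv.sum_comp π.symm (fun k => Fm k l)
        _ ≤ 1 := Fcol l
    calc T ≤ ∑ k, ∑ l, Fm k l * a k * σ l := S1
      _ = _ := S2
      _ ≤ ∑ i, τ i * σ i := S3
  -- Frobenius identities
  have hfXZ : frobSq (X - Z) = frobSq X - 2*T + frobSq Z := by
    have key : ∀ i : Fin m, ∑ j, ((X - Z) i j)^2 =
        (∑ j, (X i j)^2) - 2*(∑ j, Z i j * X i j) + ∑ j, (Z i j)^2 := by
      intro i
      have h0 : ∀ j, (X - Z) i j = X i j - Z i j := fun j => by simp [Matrix.sub_apply]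
      rw [Finset.sum_congr rfl fun j (_ : j ∈ univ) => by rw [h0 j],
        sq_expand (fun j => X i j) (fun j => Z i j)]
      have h1 : ∑ j, X i j * Z i j = ∑ j, Z i j * X i j :=
        Finset.sum_congr rfl fun j _ => by ring
      rw [h1]
    rw [frobSq, frobSq, frobSq, hT]
    rw [Finset.sum_congr rfl fun i (_ : i ∈ univ) => key i]
    rw [Finset.sum_add_distrib, Finset.sum_sub_distrib, ← Finset.mul_sum]
  have hfX : frobSq X = ∑ k, lam k := by
    rw [frobSq_eq, spec, Matrix.trace_mul_comm (W * Matrix.diagonal lam) Wᵀ,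
      ← Matrix.mul_assoc, hWtW, Matrix.one_mul, Matrix.trace_diagonal]
  have hfZ : frobSq Z = ∑ l, σ l * σ l := by
    rw [hZ]; exact frob_diag U V σ hU hV
  have htau_sq : ∑ i, (τ i)^2 = ∑ k, lam k := by
    rw [hperm (fun x => x^2)]
    refine Finset.sum_congr rfl fun k _ => ?_
    show (a k)^2 = lam k
    rw [sq, haa k]
  have hPtau : ∑ i, P (τ i) = ∑ k, P (a k) := hperm P
  have hsig_sq : ∑ i, (σ i)^2 = ∑ l, σ l * σ l :=
    Finset.sum_congr rfl fun l _ => sq (σ l)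
  have mirsky : ∑ i, (τ i - σ i)^2 ≤ frobSq (X - Z) := by
    have e1 := sq_expand τ σ
    rw [hfXZ, hfX, hfZ]
    rw [e1, htau_sq, hsig_sq]
    linarith [vonNeumann]
  have hspenR : spen P X = ∑ i, P (τ i) := by
    unfold spen
    rw [if_pos hnm, hPtau]
  calc (1 / 2) * frobSq (U * Matrix.diagonal s * Vᵀ - Z) + spen P (U * Matrix.diagonal s * Vᵀ)
      = (1 / 2) * (∑ i, (s i - σ i) ^ 2) + ∑ i, P (s i) := by rw [hfrobL, hspenL]
    _ ≤ (1 / 2) * (∑ i, (τ i - σ i) ^ 2) + ∑ i, P (τ i) := hsmin τ hτ0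
    _ ≤ (1 / 2) * frobSq (X - Z) + spen P X := by
        rw [hspenR]
        linarith [mirsky]
end

section
/- Let λ ≥ 0 and γ > 1, and let P(·; λ, γ) be the MC+ penalty. For every σ ≥ 0, the unique minimizer over α ≥ 0 of (1/2)(α − σ)² + P(α; λ, γ) is s_{λ,γ}(σ) = 0 if σ ≤ λ; s_{λ,γ}(σ) = (σ − λ)/(1 − 1/γ) if λ < σ ≤ λγ; and s_{λ,γ}(σ) = σ if σ > λγ. -/
/-- The MC+ penalty with parameters `λ ≥ 0`, `γ > 0`, defined on `σ ≥ 0`: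
`P(σ; λ, γ) = λ(σ − σ²/(2λγ))` for `0 ≤ σ < λγ` and `P(σ; λ, γ) = λ²γ/2` for `σ ≥ λγ`. -/
noncomputable def mcPlus (lam γ σ : ℝ) : ℝ :=
  if σ < lam * γ then lam * (σ - σ ^ 2 / (2 * lam * γ)) else lam ^ 2 * γ / 2

/-- The MC+ scalar thresholding operator:
`0` if `σ ≤ λ`; `(σ − λ)/(1 − 1/γ)` if `λ < σ ≤ λγ`; `σ` if `σ > λγ`. -/
noncomputable def mcPlusThresh (lam γ σ : ℝ) : ℝ :=
  if σ ≤ lam then 0 else if σ ≤ lam * γ then (σ - lam) / (1 - 1 / γ) else σ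

private lemma mc_eq_left {lam γ x : ℝ} (hlam : 0 < lam) (hγ : 0 < γ) (h : x ≤ lam * γ) :
    mcPlus lam γ x = lam * x - x ^ 2 / (2 * γ) := by
  unfold mcPlus
  split_ifs with h1
  · field_simp [hlam.ne', hγ.ne']
  · have hx : x = lam * γ := le_antisymm h (not_lt.mp h1)
    subst hx
    field_simp [hγ.ne']
    ring

private lemma mc_eq_right {lam γ x : ℝ} (h : lam * γ ≤ x) :
    mcPlus lam γ x = lam ^ 2 * γ / 2 := by
  unfold mcPlus; rw [if_neg (not_lt.mpr h)]

set_option maxHeartbeats 1600000 in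
/-- For `λ ≥ 0`, `γ > 1` and every `σ ≥ 0`, the MC+ scalar thresholding
value `s_{λ,γ}(σ)` is the unique minimizer over `α ≥ 0` of `½(α − σ)² + P(α; λ, γ)`. -/
theorem mcPlus_scalar_thresholding
    (lam γ σ : ℝ) (hlam : 0 ≤ lam) (hγ : 1 < γ) (hσ : 0 ≤ σ) :
    0 ≤ mcPlusThresh lam γ σ ∧
    (∀ α : ℝ, 0 ≤ α →
      (1 / 2) * (mcPlusThresh lam γ σ - σ) ^ 2 + mcPlus lam γ (mcPlusThresh lam γ σ) ≤
      (1 / 2) * (α - σ) ^ 2 + mcPlus lam γ α) ∧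
    (∀ α : ℝ, 0 ≤ α →
      (1 / 2) * (α - σ) ^ 2 + mcPlus lam γ α =
        (1 / 2) * (mcPlusThresh lam γ σ - σ) ^ 2 + mcPlus lam γ (mcPlusThresh lam γ σ) →
      α = mcPlusThresh lam γ σ) := by
  have hγ0 : (0:ℝ) < γ := lt_trans one_pos hγ
  have hγ1 : (0:ℝ) < γ - 1 := by linarith
  have h1γ : (0:ℝ) < 1 - 1/γ := by
    have : 1/γ < 1 := (div_lt_one hγ0).mpr hγ
    linarith
  set s := mcPlusThresh lam γ σ with hsdef
  have hs0 : 0 ≤ s := by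
    rw [hsdef]; unfold mcPlusThresh
    split_ifs with h1 h2
    · exact le_refl 0
    · exact div_nonneg (by linarith) h1γ.le
    · exact hσ
  have key : ∀ α : ℝ, 0 ≤ α → α ≠ s →
      (1/2)*(s-σ)^2 + mcPlus lam γ s < (1/2)*(α-σ)^2 + mcPlus lam γ α := by
    intro α hα hne
    rcases eq_or_lt_of_le hlam with hl0 | hl0
    · -- lam = 0
      have hl : lam = 0 := hl0.symm
      subst hl
      have hsσ : s = σ := by
        rw [hsdef]; unfold mcPlusThresh
        split_ifs with h1 h2 <;>
          first
          | linarith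
          | (rw [zero_mul] at h2; linarith)
      have hm : ∀ x : ℝ, 0 ≤ x → mcPlus 0 γ x = 0 := by
        intro x hx
        unfold mcPlus
        rw [if_neg (by rw [zero_mul]; exact not_lt.mpr hx)]
        norm_num
      rw [hsσ] at hne ⊢
      rw [hm σ hσ, hm α hα]
      have hne2 : 0 < (α - σ)^2 :=
        lt_of_le_of_ne (sq_nonneg _) (Ne.symm (pow_ne_zero 2 (sub_ne_zero.mpr hne)))
      nlinarith [hne2]
    · have hlg : 0 < lam * γ := mul_pos hl0 hγ0
      rcases le_or_gt σ lam with hA | hB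
      · -- s = 0
        have hsv : s = 0 := by rw [hsdef]; unfold mcPlusThresh; rw [if_pos hA]
        rw [hsv] at hne ⊢
        have hα0 : 0 < α := lt_of_le_of_ne hα (Ne.symm hne)
        rw [mc_eq_left hl0 hγ0 hlg.le]
        rcases le_or_gt α (lam*γ) with hc | hc
        · rw [mc_eq_left hl0 hγ0 hc]
          norm_num
          have hdiv : α^2/(2*γ) < α^2/2 := by
            rw [div_lt_div_iff₀ (by positivity) (by norm_num)]
            nlinarith [sq_nonneg α, mul_pos (mul_pos hα0 hα0) hγ1]
          nlinarith [hdiv, mul_nonneg hα (sub_nonneg.mpr hA)]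
        · rw [mc_eq_right hc.le]
          norm_num
          nlinarith [sq_nonneg (α - lam), mul_nonneg hα (sub_nonneg.mpr hA),
            mul_pos (mul_pos hl0 hl0) hγ1]
      · rcases le_or_gt σ (lam*γ) with hB2 | hC
        · -- middle case
          have hsv : s = (σ - lam)/(1 - 1/γ) := by
            rw [hsdef]; unfold mcPlusThresh; rw [if_neg (not_le.mpr hB), if_pos hB2]
          have hkey : s * (γ - 1) = γ * (σ - lam) := by
            rw [hsv]; field_simp
          have hsle : s ≤ lam * γ := by
            nlinarith [hkey, mul_nonneg hγ0.le (sub_nonneg.mpr hB2)]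
          rw [mc_eq_left hl0 hγ0 hsle]
          have hne2 : 0 < (α - s)^2 :=
            lt_of_le_of_ne (sq_nonneg _) (Ne.symm (pow_ne_zero 2 (sub_ne_zero.mpr hne)))
          have es : s^2/(2*γ)*(2*γ) = s^2 := by field_simp
          rcases le_or_gt α (lam*γ) with hc | hc
          · rw [mc_eq_left hl0 hγ0 hc]
            have h3 : (s*(γ-1))*(α-s) = (γ*(σ-lam))*(α-s) := by rw [hkey]
            have eα : α^2/(2*γ)*(2*γ) = α^2 := by field_simp
            nlinarith [eα, es, h3, mul_pos hγ1 hne2, hγ0]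
          · rw [mc_eq_right hc.le]
            have h4 : (s*(γ-1))*(lam*γ-s) = (γ*(σ-lam))*(lam*γ-s) := by rw [hkey]
            nlinarith [h4, es, hγ0,
              mul_pos hγ0 (mul_pos (sub_pos.mpr hc) (show (0:ℝ) < α + lam*γ - 2*σ by linarith)),
              mul_nonneg hγ1.le (sq_nonneg (lam*γ - s))]
        · -- σ > λγ, s = σ
          have hsv : s = σ := by
            rw [hsdef]; unfold mcPlusThresh
            rw [if_neg (not_le.mpr hB), if_neg (not_le.mpr hC)]
          rw [hsv] at hne ⊢
          rw [mc_eq_right hC.le]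
          have hne2 : 0 < (α - σ)^2 :=
            lt_of_le_of_ne (sq_nonneg _) (Ne.symm (pow_ne_zero 2 (sub_ne_zero.mpr hne)))
          rcases le_or_gt (lam*γ) α with hc | hc
          · rw [mc_eq_right hc]
            nlinarith [hne2]
          · rw [mc_eq_left hl0 hγ0 hc.le]
            have eα : α^2/(2*γ)*(2*γ) = α^2 := by field_simp
            nlinarith [eα, hγ0, hne2, mul_pos (sub_pos.mpr hc) (sub_pos.mpr hC),
              sq_nonneg (lam*γ - α), mul_nonneg hlam hγ1.le,
              mul_pos hγ0 (mul_pos (sub_pos.mpr hc) (sub_pos.mpr hC))]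
  refine ⟨hs0, ?_, ?_⟩
  · intro α hα
    by_cases h : α = s
    · subst h; exact le_rfl
    · exact (key α hα h).le
  · intro α hα heq
    by_contra h
    have := key α hα h
    linarith
end

section
/- For the MC+ penalty with parameters λ > 0 and γ > 0, the concavity measure equals φ_P = −1/γ; consequently, 1 + φ_P > 0 if and only if γ > 1, and for γ > 1 the MC+ scalar thresholding operator s_{λ,γ} (given by s_{λ,γ}(σ) = 0 for σ ≤ λ, (σ − λ)/(1 − 1/γ) for λ < σ ≤ λγ, and σ for σ > λγ) is Lipschitz continuous on [0,∞) with constant γ/(γ − 1). -/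
/-- The set of difference quotients of the derivative of a penalty `P` over `(0,∞)`;
its infimum is the concavity measure `φ_P`. -/
def derivDiffQuotients (P : ℝ → ℝ) : Set ℝ :=
  {q : ℝ | ∃ a b : ℝ, 0 < a ∧ 0 < b ∧ a ≠ b ∧ q = (deriv P a - deriv P b) / (a - b)}

lemma mcPlus_eq' (lam γ : ℝ) (hlam : 0 < lam) (hγ : 0 < γ) :
    mcPlus lam γ = fun σ => lam ^ 2 * γ / 2 - (min (σ - lam * γ) 0) ^ 2 / (2 * γ) := by
  funext σ
  unfold mcPlus
  rcases lt_or_ge σ (lam * γ) with h | h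
  · rw [if_pos h, min_eq_left (by linarith)]
    field_simp
    ring
  · rw [if_neg (not_lt.mpr h), min_eq_right (by linarith)]
    simp

lemma hasDerivAt_min_sq (c x : ℝ) :
    HasDerivAt (fun σ : ℝ => (min (σ - c) 0) ^ 2) (2 * min (x - c) 0) x := by
  rcases lt_trichotomy x c with h | h | h
  · have : HasDerivAt (fun σ : ℝ => (σ - c) ^ 2) (2 * (x - c)) x := by
      have := ((hasDerivAt_id x).sub_const c).pow 2
      simpa [Pi.pow_def] using this
    rw [min_eq_left (by linarith)]
    refine this.congr_of_eventuallyEq ?_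
    filter_upwards [Iio_mem_nhds h] with y hy
    rw [min_eq_left (by simp at hy; linarith)]
  · subst h
    rw [hasDerivAt_iff_tendsto_slope]
    have hcg : ∀ᶠ y in nhdsWithin x {x}ᶜ,
        slope (fun σ : ℝ => (min (σ - x) 0) ^ 2) x y = min (y - x) 0 := by
      filter_upwards [self_mem_nhdsWithin] with y hy
      have hyx : y ≠ x := hy
      rcases lt_or_ge y x with h' | h'
      · rw [slope_def_field, min_eq_left (by linarith), min_eq_left (by linarith)]
        have hne : y - x ≠ 0 := sub_ne_zero.mpr hyx
        field_simp
        ring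
      · have hyx' : x < y := lt_of_le_of_ne h' (Ne.symm hyx)
        rw [slope_def_field, min_eq_right (by linarith), min_eq_right (by linarith)]
        simp
    rw [Filter.tendsto_congr' hcg]
    have : Filter.Tendsto (fun y : ℝ => min (y - x) 0) (nhds x) (nhds (min (x - x) 0)) :=
      ((continuous_id.sub continuous_const).min continuous_const).continuousAt
    simp only [sub_self, min_self] at this ⊢
    simpa using this.mono_left nhdsWithin_le_nhds
  · have h0 : HasDerivAt (fun _ : ℝ => (0:ℝ)) 0 x := hasDerivAt_const x 0
    rw [min_eq_right (by linarith), mul_zero]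
    refine h0.congr_of_eventuallyEq ?_
    filter_upwards [Ioi_mem_nhds h] with y hy
    rw [min_eq_right (by simp at hy; linarith)]
    simp

lemma mcPlus_deriv (lam γ : ℝ) (hlam : 0 < lam) (hγ : 0 < γ) (σ : ℝ) :
    deriv (mcPlus lam γ) σ = -(min (σ - lam * γ) 0) / γ := by
  have h2 : HasDerivAt (mcPlus lam γ) (-(min (σ - lam * γ) 0) / γ) σ := by
    rw [mcPlus_eq' lam γ hlam hγ]
    have h3 := (hasDerivAt_const σ (lam ^ 2 * γ / 2)).sub
      ((hasDerivAt_min_sq (lam * γ) σ).div_const (2 * γ))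
    refine h3.congr_deriv ?_
    field_simp
    ring
  exact h2.deriv

lemma thresh_lip (lam γ : ℝ) (hlam : 0 < lam) (hγ : 1 < γ) {a b : ℝ} (hba : b ≤ a) :
    0 ≤ mcPlusThresh lam γ a - mcPlusThresh lam γ b ∧
      mcPlusThresh lam γ a - mcPlusThresh lam γ b ≤ γ / (γ - 1) * (a - b) := by
  have hγ0 : 0 < γ := by linarith
  have hγ1 : 0 < γ - 1 := by linarith
  have hK : γ / (γ - 1) * (γ - 1) = γ := div_mul_cancel₀ γ (by linarith)
  have hK1 : 1 ≤ γ / (γ - 1) := by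
    rw [le_div_iff₀ hγ1]; linarith
  have hKpos : 0 < γ / (γ - 1) := by positivity
  have hdiv : ∀ x : ℝ, x / (1 - 1 / γ) = γ / (γ - 1) * x := by
    intro x
    rw [div_eq_iff (by intro h; rw [sub_eq_zero] at h; field_simp at h; linarith)]
    field_simp
  unfold mcPlusThresh
  split_ifs with h1 h2 h3 h4 h5 h6 h7 <;>
    (try simp only [hdiv]) <;> constructor <;> nlinarith [hKpos, hK1, hK, mul_pos hKpos hγ1]

/-- For the MC+ penalty with `λ > 0`, `γ > 0`, the concavity measure is
`φ_P = −1/γ`; consequently `1 + φ_P > 0 ↔ γ > 1`, and for `γ > 1` the MC+ scalar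
thresholding operator is Lipschitz on `[0,∞)` with constant `γ/(γ − 1)`. -/
theorem mcPlus_concavity_measure_and_lipschitz
    (lam γ : ℝ) (hlam : 0 < lam) (hγ : 0 < γ) :
    IsGLB (derivDiffQuotients (mcPlus lam γ)) (-1 / γ) ∧
    (0 < 1 + (-1 / γ) ↔ 1 < γ) ∧
    (1 < γ → ∀ a b : ℝ, 0 ≤ a → 0 ≤ b →
      |mcPlusThresh lam γ a - mcPlusThresh lam γ b| ≤ (γ / (γ - 1)) * |a - b|) := by
  refine ⟨IsLeast.isGLB ⟨?_, ?_⟩, ?_, ?_⟩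
  · -- membership
    refine ⟨lam * γ / 2, lam * γ / 4, by positivity, by positivity,
      by intro h; nlinarith, ?_⟩
    rw [mcPlus_deriv lam γ hlam hγ, mcPlus_deriv lam γ hlam hγ,
      min_eq_left (by nlinarith), min_eq_left (by nlinarith)]
    have e1 : (-(lam * γ / 2 - lam * γ) / γ - -(lam * γ / 4 - lam * γ) / γ)
        = -(lam * γ / 4) / γ := by ring
    have e2 : lam * γ / 2 - lam * γ / 4 = lam * γ / 4 := by ring
    rw [e1, e2, div_div, div_eq_div_iff hγ.ne' (by positivity : γ * (lam * γ / 4) ≠ 0)]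
    ring
  · -- lower bound
    rintro q ⟨a, b, ha, hb, hab, rfl⟩
    rw [mcPlus_deriv lam γ hlam hγ, mcPlus_deriv lam γ hlam hγ]
    set c := lam * γ with hc
    have key : ∀ x y : ℝ, y < x → min (x - c) 0 - min (y - c) 0 ≤ x - y := by
      intro x y hxy
      rcases le_total (x - c) 0 with h | h <;> rcases le_total (y - c) 0 with h' | h' <;>
        simp only [min_eq_left, min_eq_right, h, h'] <;> linarith
    rcases hab.lt_or_gt with h | h
    · rw [le_div_iff_of_neg (sub_neg.mpr h)]
      have hk := key b a h
      have e1 : (-(min (a - c) 0) / γ - -(min (b - c) 0) / γ)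
          = (min (b - c) 0 - min (a - c) 0) / γ := by ring
      have e2 : -1 / γ * (a - b) = (b - a) / γ := by ring
      rw [e1, e2, div_le_div_iff_of_pos_right hγ]
      linarith
    · rw [le_div_iff₀ (sub_pos.mpr h)]
      have hk := key a b h
      have e1 : (-(min (a - c) 0) / γ - -(min (b - c) 0) / γ)
          = (min (b - c) 0 - min (a - c) 0) / γ := by ring
      have e2 : -1 / γ * (a - b) = (b - a) / γ := by ring
      rw [e1, e2, div_le_div_iff_of_pos_right hγ]
      linarith
  · -- iff
    have e : 1 + (-1 / γ) = (γ - 1) / γ := by field_simp; ring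
    rw [e, div_pos_iff]
    constructor
    · rintro (⟨h, _⟩ | ⟨_, h⟩) <;> linarith
    · intro h; exact Or.inl ⟨by linarith, hγ⟩
  · intro hγ1 a b ha hb
    rcases le_total b a with h | h
    · obtain ⟨h0, h1⟩ := thresh_lip lam γ hlam hγ1 h
      rw [abs_of_nonneg h0, abs_of_nonneg (sub_nonneg.mpr h)]
      exact h1
    · obtain ⟨h0, h1⟩ := thresh_lip lam γ hlam hγ1 h
      rw [abs_sub_comm, abs_of_nonneg h0, abs_sub_comm a b, abs_of_nonneg (sub_nonneg.mpr h)]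
      exact h1
end

section
/- For ζ > 0 and γ > 1, the function h(t) := t · g_{ζ,γ}(t) on [0,∞) is Lipschitz continuous with constant (2γ − 1)/(2γ − 2); that is, for all t₁, t₂ ≥ 0, |t₁ g_{ζ,γ}(t₁) − t₂ g_{ζ,γ}(t₂)| ≤ ((2γ − 1)/(2γ − 2))·|t₁ − t₂|, and in particular the divided differences (t₁ g_{ζ,γ}(t₁) − t₂ g_{ζ,γ}(t₂))/(t₁ − t₂) for t₁ ≠ t₂ are bounded in absolute value by (2γ − 1)/(2γ − 2). -/
/-- The function `g_{ζ,γ}` on `β ≥ 0`: `0` if `√β ≤ ζ`;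
`(γ/(γ−1))(1 − ζ/√β)` if `ζ < √β ≤ ζγ`; `1` if `√β > ζγ`. -/
noncomputable def gfun (ζ γ β : ℝ) : ℝ :=
  if Real.sqrt β ≤ ζ then 0
  else if Real.sqrt β ≤ ζ * γ then (γ / (γ - 1)) * (1 - ζ / Real.sqrt β)
  else 1

set_option maxHeartbeats 1000000 in
lemma gfun_key (ζ γ : ℝ) (hζ : 0 < ζ) (hγ : 1 < γ) {t₁ t₂ : ℝ}
    (ht2 : 0 ≤ t₂) (ht12 : t₂ ≤ t₁) :
    t₂ * gfun ζ γ t₂ ≤ t₁ * gfun ζ γ t₁ ∧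
    t₁ * gfun ζ γ t₁ - t₂ * gfun ζ γ t₂ ≤ ((2 * γ - 1) / (2 * γ - 2)) * (t₁ - t₂) := by
  have ht1 : 0 ≤ t₁ := le_trans ht2 ht12
  have hγ1 : (0:ℝ) < γ - 1 := by linarith
  have hγ2 : (0:ℝ) < 2 * γ - 2 := by linarith
  set s₁ := Real.sqrt t₁ with hs1
  set s₂ := Real.sqrt t₂ with hs2
  have hsq1 : s₁ ^ 2 = t₁ := Real.sq_sqrt ht1
  have hsq2 : s₂ ^ 2 = t₂ := Real.sq_sqrt ht2
  have hs1n : 0 ≤ s₁ := Real.sqrt_nonneg _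
  have hs2n : 0 ≤ s₂ := Real.sqrt_nonneg _
  have hss : s₂ ≤ s₁ := Real.sqrt_le_sqrt ht12
  have hmid : ∀ s : ℝ, ζ < s → s ^ 2 * (γ / (γ - 1) * (1 - ζ / s)) = γ * (s * (s - ζ)) / (γ - 1) := by
    intro s hs
    have hsne : s ≠ 0 := ne_of_gt (lt_trans hζ hs)
    field_simp
  have hdiff : 0 ≤ s₁ ^ 2 - s₂ ^ 2 := by nlinarith
  clear_value s₁ s₂
  clear hs1 hs2
  unfold gfun
  rw [← hsq1, ← hsq2, Real.sqrt_sq hs1n, Real.sqrt_sq hs2n]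
  split_ifs with c1 c2 c3 c4 c5 c6 c7 c8
  · -- (0,0)
    constructor
    · simp
    · have hL : 0 ≤ (2 * γ - 1) / (2 * γ - 2) := by
        apply div_nonneg <;> linarith
      nlinarith [mul_nonneg hL hdiff]
  · -- (0, mid)
    push_neg at c2
    rw [hmid s₁ c2]
    constructor
    · simp only [mul_zero]
      apply div_nonneg _ hγ1.le
      have h := mul_nonneg hs1n (by linarith : (0:ℝ) ≤ s₁ - ζ)
      nlinarith [mul_nonneg hγ1.le h]
    · simp only [mul_zero, sub_zero]
      rw [div_mul_eq_mul_div, div_le_div_iff₀ hγ1 hγ2]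
      have k1 : 0 ≤ (s₁ - ζ) * ((2 * γ - 1) * ζ - s₁) := by
        apply mul_nonneg (by linarith)
        nlinarith
      have k2 : s₂ ^ 2 ≤ ζ ^ 2 := by nlinarith
      nlinarith [mul_nonneg hγ1.le k1,
        mul_nonneg (mul_nonneg hγ1.le (by linarith : (0:ℝ) ≤ 2 * γ - 1)) (sub_nonneg.mpr k2)]
  · -- (0, top)
    push_neg at c2 c3
    constructor
    · simp only [mul_zero, mul_one]; positivity
    · simp only [mul_zero, mul_one, sub_zero]
      rw [div_mul_eq_mul_div, le_div_iff₀ hγ2]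
      have k2 : s₂ ^ 2 ≤ ζ ^ 2 := by nlinarith
      have k3 : (ζ * γ) ^ 2 ≤ s₁ ^ 2 :=
        pow_le_pow_left₀ (by positivity) c3.le 2
      nlinarith [mul_nonneg (mul_nonneg hγ1.le (by linarith : (0:ℝ) ≤ 2 * γ - 1)) (sub_nonneg.mpr k2),
        mul_nonneg hγ1.le (sub_nonneg.mpr k3),
        mul_nonneg (sq_nonneg (γ - 1)) (sq_nonneg ζ)]
  · -- contradiction: s₂ mid, s₁ ≤ ζ
    exfalso; push_neg at c1; linarith
  · -- (mid, mid)
    push_neg at c1 c5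
    rw [hmid s₁ c5, hmid s₂ c1]
    constructor
    · rw [div_le_div_iff₀ hγ1 hγ1]
      nlinarith [mul_nonneg (mul_nonneg (by nlinarith : (0:ℝ) ≤ γ * (γ - 1))
        (sub_nonneg.mpr hss)) (by linarith : (0:ℝ) ≤ s₁ + s₂ - ζ)]
    · rw [← sub_div, div_mul_eq_mul_div, div_le_div_iff₀ hγ1 hγ2]
      nlinarith [mul_nonneg (mul_nonneg hγ1.le (sub_nonneg.mpr hss))
        (by linarith : (0:ℝ) ≤ 2 * γ * ζ - s₁ - s₂)]
  · -- (mid, top)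
    push_neg at c1 c5 c6
    rw [hmid s₂ c1]
    constructor
    · simp only [mul_one]
      rw [div_le_iff₀ hγ1]
      nlinarith [mul_nonneg hs2n (by linarith : (0:ℝ) ≤ ζ * γ - s₂), mul_nonneg hγ1.le hdiff]
    · simp only [mul_one]
      have e : s₁ ^ 2 - γ * (s₂ * (s₂ - ζ)) / (γ - 1)
          = (s₁ ^ 2 * (γ - 1) - γ * (s₂ * (s₂ - ζ))) / (γ - 1) := by
        field_simp
      rw [e, div_mul_eq_mul_div, div_le_div_iff₀ hγ1 hγ2]
      have k3 : (ζ * γ) ^ 2 ≤ s₁ ^ 2 :=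
        pow_le_pow_left₀ (by positivity) c6.le 2
      nlinarith [mul_nonneg hγ1.le (sq_nonneg (ζ * γ - s₂)),
        mul_nonneg hγ1.le (by nlinarith : (0:ℝ) ≤ s₁ ^ 2 - (ζ * γ) ^ 2)]
  · -- contradiction: s₂ top, s₁ ≤ ζ
    exfalso; push_neg at c1 c4
    nlinarith [mul_pos hζ hγ1]
  · -- contradiction: s₂ top, s₁ mid
    exfalso; push_neg at c4; linarith
  · -- (top, top)
    simp only [mul_one]
    constructor
    · nlinarith
    · rw [div_mul_eq_mul_div, le_div_iff₀ hγ2]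
      nlinarith [mul_nonneg hγ1.le hdiff]

/-- For `ζ > 0`, `γ > 1`, the map `t ↦ t·g_{ζ,γ}(t)` is Lipschitz on
`[0,∞)` with constant `(2γ−1)/(2γ−2)`; in particular its divided differences are bounded in
absolute value by `(2γ−1)/(2γ−2)`. -/
theorem gfun_lipschitz (ζ γ : ℝ) (hζ : 0 < ζ) (hγ : 1 < γ) :
    (∀ t₁ t₂ : ℝ, 0 ≤ t₁ → 0 ≤ t₂ →
      |t₁ * gfun ζ γ t₁ - t₂ * gfun ζ γ t₂| ≤ ((2 * γ - 1) / (2 * γ - 2)) * |t₁ - t₂|) ∧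
    (∀ t₁ t₂ : ℝ, 0 ≤ t₁ → 0 ≤ t₂ → t₁ ≠ t₂ →
      |(t₁ * gfun ζ γ t₁ - t₂ * gfun ζ γ t₂) / (t₁ - t₂)| ≤ (2 * γ - 1) / (2 * γ - 2)) := by
  have main : ∀ t₁ t₂ : ℝ, 0 ≤ t₁ → 0 ≤ t₂ →
      |t₁ * gfun ζ γ t₁ - t₂ * gfun ζ γ t₂| ≤ ((2 * γ - 1) / (2 * γ - 2)) * |t₁ - t₂| := by
    intro t₁ t₂ h1 h2
    rcases le_total t₂ t₁ with h | h
    · obtain ⟨ha, hb⟩ := gfun_key ζ γ hζ hγ h2 h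
      rw [abs_of_nonneg (by linarith), abs_of_nonneg (by linarith)]
      exact hb
    · obtain ⟨ha, hb⟩ := gfun_key ζ γ hζ hγ h1 h
      rw [abs_sub_comm, abs_sub_comm t₁ t₂, abs_of_nonneg (by linarith),
        abs_of_nonneg (by linarith)]
      exact hb
  refine ⟨main, fun t₁ t₂ h1 h2 hne => ?_⟩
  rw [abs_div, div_le_iff₀ (abs_pos.mpr (sub_ne_zero.mpr hne))]
  exact main t₁ t₂ h1 h2
end
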